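/- Existence of the TB-only endemic equilibrium of the full model (part of Theorem 5.2): suppose R0T = βe·Λ·k1/(N·d·(d+r+dT)·(d+k1)) > 1. Let λT* = (βe·Λ·k1·(d+dT+r1)/N − d·(d+r+dT)·(d+k1)·(d+dT+r1)) / ((d+dT+r)·(d+k1)·(d+dT+r1) − r·k1·r1), A = (d+r+dT)·(d+λT*)·(d+k1)·(d+dT+r1) − r·λT*·k1·r1, Ŝ = Λ·(d+r+dT)·(d+k1)·(d+dT+r1)/A, T̂_L = Λ·λT*·(d+r+dT)·(d+dT+r1)/A, T̂_I = Λ·λT*·k1·(d+dT+r1)/A, T̂_T = r·Λ·λT*·k1/A. Then the twelve-dimensional point E_T = (Ŝ, T̂_L, T̂_I, 0, 0, 0, 0, 0, 0, 0, 0, T̂_T) makes all twelve right-hand sides of the full HIV–TB model (with N held as the fixed positive constant) vanish, and Ŝ, T̂_L, T̂_I, T̂_T are all strictly positive. -/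

import Mathlib

set_option maxHeartbeats 1000000 in
/-- Existence of the TB-only endemic equilibrium of the full model (part of Theorem 5.2):
if `R0T > 1`, the point `E_T = (Ŝ, T̂_L, T̂_I, 0, 0, 0, 0, 0, 0, 0, 0, T̂_T)` makes all
twelve right-hand sides of the full HIV–TB model vanish, and `Ŝ, T̂_L, T̂_I, T̂_T > 0`. -/
theorem full_TB_endemic_equilibrium
    (Lam d dT dH dHT k1 k2 r r1 r2 r3 p1 p2 e1 e2 g be ls Nv : ℝ)
    (hLam : 0 < Lam) (hd : 0 < d) (hdT : 0 < dT) (hdH : 0 < dH) (hdHT : 0 < dHT)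
    (hk1 : 0 < k1) (hk2 : 0 < k2) (hr : 0 < r) (hr1 : 0 < r1) (hr2 : 0 < r2)
    (hr3 : 0 < r3) (hp1 : 0 < p1) (hp2 : 0 < p2) (he1 : 0 < e1) (he2 : 0 < e2)
    (hg : 0 < g) (hbe : 0 < be) (hls : 0 < ls) (hNv : 0 < Nv)
    (al : ℝ) (hal : al = g * p1 / (p1 + p2))
    (hR : 1 < be * Lam * k1 / (Nv * d * (d + r + dT) * (d + k1)))
    (lamT A Sh TLh TIh TTh : ℝ)
    (hlamT : lamT = (be * Lam * k1 * (d + dT + r1) / Nv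
        - d * (d + r + dT) * (d + k1) * (d + dT + r1)) /
        ((d + dT + r) * (d + k1) * (d + dT + r1) - r * k1 * r1))
    (hA : A = (d + r + dT) * (d + lamT) * (d + k1) * (d + dT + r1) - r * lamT * k1 * r1)
    (hSh : Sh = Lam * (d + r + dT) * (d + k1) * (d + dT + r1) / A)
    (hTLh : TLh = Lam * lamT * (d + r + dT) * (d + dT + r1) / A)
    (hTIh : TIh = Lam * lamT * k1 * (d + dT + r1) / A)
    (hTTh : TTh = r * Lam * lamT * k1 / A) :
    (0 < Sh ∧ 0 < TLh ∧ 0 < TIh ∧ 0 < TTh) ∧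
    -- the twelve right-hand sides of the full model, evaluated at
    -- (Sh, TLh, TIh, 0, 0, 0, 0, 0, 0, 0, 0, TTh), all vanish:
    (Lam - be * Sh * (TIh + 0) / Nv - d * Sh
        - ls * Sh * (0 + 0 + 0 + 0 + 0) / Nv + r1 * TTh = 0) ∧
    (be * Sh * (TIh + 0) / Nv - (d + k1) * TLh
        - ls * TLh * (0 + 0 + 0 + 0 + 0) / Nv = 0) ∧
    (k1 * TLh - (d + dT + r) * TIh - ls * TIh * (0 + 0 + 0 + 0 + 0) / Nv = 0) ∧
    (ls * Sh * (0 + 0 + 0 + 0 + 0) / Nv - (r2 + d + dH) * 0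
        - be * 0 * (TIh + 0) / Nv + p2 * 0 = 0) ∧
    (ls * TLh * (0 + 0 + 0 + 0 + 0) / Nv + be * 0 * (TIh + 0) / Nv
        - (k2 + d + dH) * 0 = 0) ∧
    (k2 * 0 + ls * TIh * (0 + 0 + 0 + 0 + 0) / Nv - (d + dT + dH + r3) * 0 = 0) ∧
    (r3 * 0 - (p1 + d + dH + e1) * 0 = 0) ∧
    (p1 * 0 - (p2 + d + dH + e2) * 0 = 0) ∧
    (e1 * 0 - (p1 + d + dH + g * dHT) * 0 = 0) ∧
    (e2 * 0 + p1 * 0 - (d + dH + al * dHT) * 0 = 0) ∧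
    (p2 * 0 + r2 * 0 - (d + dH) * 0 = 0) ∧
    (r * TIh - (r1 + d + dT) * TTh = 0) := by
  have hx1 : 0 < d + r + dT := by linarith
  have hx2 : 0 < d + k1 := by linarith
  have hx3 : 0 < d + dT + r1 := by linarith
  have hD : 0 < (d + dT + r) * (d + k1) * (d + dT + r1) - r * k1 * r1 := by
    nlinarith [mul_pos (mul_pos (show (0:ℝ) < d + dT by linarith) hx2) hx3,
      mul_pos (mul_pos hr hd) hx3,
      mul_pos (mul_pos hr hk1) (show (0:ℝ) < d + dT by linarith)]
  have hden : 0 < Nv * d * (d + r + dT) * (d + k1) := by positivity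
  have hRR : Nv * d * (d + r + dT) * (d + k1) < be * Lam * k1 :=
    (one_lt_div hden).mp hR
  have hnum : 0 < be * Lam * k1 * (d + dT + r1) / Nv
      - d * (d + r + dT) * (d + k1) * (d + dT + r1) := by
    rw [sub_pos, lt_div_iff₀ hNv]
    nlinarith [mul_lt_mul_of_pos_right hRR hx3]
  have hlam : 0 < lamT := by rw [hlamT]; exact div_pos hnum hD
  have hkey0 : Nv * (lamT * ((d + dT + r) * (d + k1) * (d + dT + r1) - r * k1 * r1))
      = be * Lam * k1 * (d + dT + r1)
        - Nv * (d * (d + r + dT) * (d + k1) * (d + dT + r1)) := by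
    rw [hlamT, div_mul_cancel₀ _ hD.ne', mul_sub, mul_div_cancel₀ _ hNv.ne']
  have key : Nv * A = be * Lam * k1 * (d + dT + r1) := by
    rw [hA]; linear_combination hkey0
  have hApos : 0 < A := by
    have h1 : 0 < Nv * A := by rw [key]; positivity
    nlinarith
  have hA0 : A ≠ 0 := hApos.ne'
  have hN0 : Nv ≠ 0 := hNv.ne'
  have e1 : be * Sh * (TIh + 0) / Nv = lamT * Sh := by
    rw [hSh, hTIh]
    field_simp
    linear_combination (-lamT) * key
  refine ⟨⟨?_, ?_, ?_, ?_⟩, ?_, ?_, ?_, by simp, by simp, by simp, by simp,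
    by simp, by simp, by simp [hal], by simp, ?_⟩
  · rw [hSh]; exact div_pos (by positivity) hApos
  · rw [hTLh]
    exact div_pos (mul_pos (mul_pos (mul_pos hLam hlam) hx1) hx3) hApos
  · rw [hTIh]
    exact div_pos (mul_pos (mul_pos (mul_pos hLam hlam) hk1) hx3) hApos
  · rw [hTTh]
    exact div_pos (mul_pos (mul_pos (mul_pos hr hLam) hlam) hk1) hApos
  · rw [e1, hSh, hTTh]
    field_simp
    linear_combination Lam * Nv * hA
  · rw [e1, hSh, hTLh]
    field_simp
    ring
  · rw [hTLh, hTIh]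
    field_simp
    ring
  · rw [hTIh, hTTh]
    field_simp
    ring
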